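/- arXiv:2406.11751 — 3 statements merged into one kernel-verified Lean document; each statement's English description precedes it below -/
import Mathlib

section
/- Under the perturbed basic Cholesky-QR model, if κ(A)²γ₂ < 1 where γ₂ ≡ 2ε_A + ε_A² + (1+ε_A)²(ε₁ + (1+ε₁)ε₂), then the matrix Ĝ + E₂ is symmetric positive definite. -/
open Matrix

/-- Spectral (two-)norm of a real matrix. -/
noncomputable def spec {m n : ℕ} (M : Matrix (Fin m) (Fin n) ℝ) : ℝ :=
  ‖LinearMap.toContinuousLinearMap (Matrix.toEuclideanLin M)‖

/-- Singular values of a real `m × n` matrix, in decreasing order: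
`singularValues M i` is `σ_{i+1}(M)` (0-based). -/
noncomputable def singularValues {m n : ℕ} (M : Matrix (Fin m) (Fin n) ℝ) : Fin n → ℝ :=
  fun i =>
    Real.sqrt (((Matrix.isHermitian_conjTranspose_mul_self M).eigenvalues ∘
      ⇑(Tuple.sort (Matrix.isHermitian_conjTranspose_mul_self M).eigenvalues)) i.rev)

/-- Two-norm condition number `κ(M) = σ₁(M)/σₙ(M)`. -/
noncomputable def kappa {m n : ℕ} (M : Matrix (Fin m) (Fin n) ℝ) : ℝ :=
  if h : 0 < n then
    singularValues M ⟨0, h⟩ / singularValues M ⟨n - 1, Nat.sub_lt h Nat.one_pos⟩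
  else 1

/-- Smallest singular value `σₙ(M)`. -/
noncomputable def sigmaMin {m n : ℕ} (M : Matrix (Fin m) (Fin n) ℝ) : ℝ :=
  if h : 0 < n then singularValues M ⟨n - 1, Nat.sub_lt h Nat.one_pos⟩ else 1

/-- Eigenvalues of a real symmetric matrix in decreasing order:
`symmEigs M j` is `λ_{j+1}(M)` (0-based). -/
noncomputable def symmEigs {n : ℕ} (M : Matrix (Fin n) (Fin n) ℝ) : Fin n → ℝ :=
  fun j =>
    if h : M.IsHermitian then (h.eigenvalues ∘ ⇑(Tuple.sort h.eigenvalues)) j.rev else 0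

/-! ### Auxiliary lemmas -/

/-- Coercion of a plain vector into `EuclideanSpace`. -/
noncomputable def ev {k : ℕ} (v : Fin k → ℝ) : EuclideanSpace ℝ (Fin k) :=
  (WithLp.equiv 2 _).symm v

lemma inner_ev {k : ℕ} (v w : Fin k → ℝ) : (inner ℝ (ev v) (ev w) : ℝ) = v ⬝ᵥ w := by
  simp [ev, PiLp.inner_apply, dotProduct, RCLike.inner_apply, mul_comm]

lemma norm_ev_sq {k : ℕ} (v : Fin k → ℝ) : ‖ev v‖ ^ 2 = v ⬝ᵥ v := by
  rw [← real_inner_self_eq_norm_sq, inner_ev]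

lemma ev_add {k : ℕ} (v w : Fin k → ℝ) : ev (v + w) = ev v + ev w := rfl

lemma spec_mulVec {m n : ℕ} (M : Matrix (Fin m) (Fin n) ℝ) (x : Fin n → ℝ) :
    ‖ev (M *ᵥ x)‖ ≤ spec M * ‖ev x‖ := by
  have := (LinearMap.toContinuousLinearMap (Matrix.toEuclideanLin M)).le_opNorm (ev x)
  simpa [ev, spec] using this

lemma spec_le_bound {m n : ℕ} (M : Matrix (Fin m) (Fin n) ℝ) {c : ℝ} (hc : 0 ≤ c)
    (h : ∀ x : Fin n → ℝ, ‖ev (M *ᵥ x)‖ ≤ c * ‖ev x‖) : spec M ≤ c := by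
  apply ContinuousLinearMap.opNorm_le_bound _ hc
  intro y
  simpa [ev, Matrix.toEuclideanLin_apply] using h ((WithLp.equiv 2 _) y)

lemma spec_nonneg {m n : ℕ} (M : Matrix (Fin m) (Fin n) ℝ) : 0 ≤ spec M := norm_nonneg _

lemma eq_zero_of_spec_eq_zero {m n : ℕ} {M : Matrix (Fin m) (Fin n) ℝ} (h : spec M = 0) :
    M = 0 := by
  have h2 : LinearMap.toContinuousLinearMap (Matrix.toEuclideanLin M) = 0 := by
    rwa [← norm_eq_zero]
  have h3 : Matrix.toEuclideanLin M = 0 := by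
    have := congrArg (ContinuousLinearMap.toLinearMap) h2
    simpa using this
  exact (LinearEquiv.map_eq_zero_iff _).mp h3

lemma quadform_eq {n : ℕ} {N : Matrix (Fin n) (Fin n) ℝ} (h : N.IsHermitian)
    (x : Fin n → ℝ) :
    x ⬝ᵥ (N *ᵥ x) = ∑ i, h.eigenvalues i *
      ((star (h.eigenvectorUnitary : Matrix (Fin n) (Fin n) ℝ) *ᵥ x) i)^2 := by
  set U : Matrix (Fin n) (Fin n) ℝ := (h.eigenvectorUnitary : Matrix (Fin n) (Fin n) ℝ) with hU
  set y : Fin n → ℝ := star U *ᵥ x with hy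
  conv_lhs => rw [h.spectral_theorem, Unitary.conjStarAlgAut_apply]
  rw [← mulVec_mulVec, ← mulVec_mulVec, dotProduct_mulVec]
  have hxU : x ᵥ* U = y := by
    rw [hy, star_eq_conjTranspose, conjTranspose_eq_transpose_of_trivial, mulVec_transpose]
  rw [hxU]
  have : star U *ᵥ x = y := rfl
  rw [show (diagonal (RCLike.ofReal ∘ h.eigenvalues) : Matrix (Fin n) (Fin n) ℝ)
      = diagonal h.eigenvalues by simp [Function.comp]]
  simp [dotProduct, mulVec_diagonal, pow_two]
  ring_nf
  apply Finset.sum_congr rfl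
  intros; ring

lemma sum_sq_y {n : ℕ} {N : Matrix (Fin n) (Fin n) ℝ} (h : N.IsHermitian) (x : Fin n → ℝ) :
    ∑ i, ((star (h.eigenvectorUnitary : Matrix (Fin n) (Fin n) ℝ) *ᵥ x) i)^2 = x ⬝ᵥ x := by
  set U : Matrix (Fin n) (Fin n) ℝ := (h.eigenvectorUnitary : Matrix (Fin n) (Fin n) ℝ) with hU
  have h1 : U * star U = 1 := Unitary.mul_star_self_of_mem h.eigenvectorUnitary.2
  have : ∑ i, ((star U *ᵥ x) i)^2 = (star U *ᵥ x) ⬝ᵥ (star U *ᵥ x) := by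
    simp [dotProduct, pow_two]
  rw [this, dotProduct_mulVec, star_eq_conjTranspose, conjTranspose_eq_transpose_of_trivial,
    vecMul_transpose, mulVec_mulVec]
  have h2 : U * Uᵀ = 1 := by
    rw [← conjTranspose_eq_transpose_of_trivial, ← star_eq_conjTranspose]; exact h1
  rw [h2, one_mulVec]

lemma rayleigh_low {n : ℕ} {N : Matrix (Fin n) (Fin n) ℝ} (h : N.IsHermitian)
    {c : ℝ} (hc : ∀ i, c ≤ h.eigenvalues i) (x : Fin n → ℝ) :
    c * (x ⬝ᵥ x) ≤ x ⬝ᵥ (N *ᵥ x) := by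
  rw [quadform_eq h x, ← sum_sq_y h x, Finset.mul_sum]
  exact Finset.sum_le_sum fun i _ => mul_le_mul_of_nonneg_right (hc i) (sq_nonneg _)

lemma rayleigh_high {n : ℕ} {N : Matrix (Fin n) (Fin n) ℝ} (h : N.IsHermitian)
    {c : ℝ} (hc : ∀ i, h.eigenvalues i ≤ c) (x : Fin n → ℝ) :
    x ⬝ᵥ (N *ᵥ x) ≤ c * (x ⬝ᵥ x) := by
  rw [quadform_eq h x, ← sum_sq_y h x, Finset.mul_sum]
  exact Finset.sum_le_sum fun i _ => mul_le_mul_of_nonneg_right (hc i) (sq_nonneg _)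

lemma dot_transpose_mul {m n : ℕ} (M : Matrix (Fin m) (Fin n) ℝ) (x : Fin n → ℝ) :
    x ⬝ᵥ ((Mᵀ * M) *ᵥ x) = (M *ᵥ x) ⬝ᵥ (M *ᵥ x) := by
  rw [← mulVec_mulVec, dotProduct_mulVec, vecMul_transpose]

/-- Cauchy–Schwarz style bound for the quadratic form of any matrix. -/
lemma quad_abs_le {n : ℕ} (B : Matrix (Fin n) (Fin n) ℝ) (x : Fin n → ℝ) :
    |x ⬝ᵥ (B *ᵥ x)| ≤ spec B * ‖ev x‖ ^ 2 := by
  have h1 : x ⬝ᵥ (B *ᵥ x) = (inner ℝ (ev x) (ev (B *ᵥ x)) : ℝ) := (inner_ev _ _).symm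
  rw [h1]
  calc |(inner ℝ (ev x) (ev (B *ᵥ x)) : ℝ)| ≤ ‖ev x‖ * ‖ev (B *ᵥ x)‖ :=
        abs_real_inner_le_norm _ _
    _ ≤ ‖ev x‖ * (spec B * ‖ev x‖) :=
        mul_le_mul_of_nonneg_left (spec_mulVec _ _) (norm_nonneg _)
    _ = spec B * ‖ev x‖ ^ 2 := by ring

/-- `spec Mᵀ ≤ spec M`. -/
lemma spec_transpose_le {m n : ℕ} (M : Matrix (Fin m) (Fin n) ℝ) :
    spec Mᵀ ≤ spec M := by
  apply spec_le_bound _ (spec_nonneg M)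
  intro y
  set r := ‖ev (Mᵀ *ᵥ y)‖ with hr
  have hr0 : 0 ≤ r := norm_nonneg _
  rcases eq_or_lt_of_le hr0 with h0 | h0
  · rw [← h0]; exact mul_nonneg (spec_nonneg M) (norm_nonneg _)
  have key : r ^ 2 ≤ ‖ev y‖ * (spec M * r) := by
    have h1 : r ^ 2 = (Mᵀ *ᵥ y) ⬝ᵥ (Mᵀ *ᵥ y) := norm_ev_sq _
    have h2 : (Mᵀ *ᵥ y) ⬝ᵥ (Mᵀ *ᵥ y) = y ⬝ᵥ (M *ᵥ (Mᵀ *ᵥ y)) := by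
      rw [dotProduct_mulVec (Mᵀ *ᵥ y) Mᵀ y]
      rw [vecMul_transpose, dotProduct_comm]
    have h3 : y ⬝ᵥ (M *ᵥ (Mᵀ *ᵥ y)) = (inner ℝ (ev y) (ev (M *ᵥ (Mᵀ *ᵥ y))) : ℝ) :=
      (inner_ev _ _).symm
    have h4 : (inner ℝ (ev y) (ev (M *ᵥ (Mᵀ *ᵥ y))) : ℝ) ≤ ‖ev y‖ * ‖ev (M *ᵥ (Mᵀ *ᵥ y))‖ :=
      real_inner_le_norm _ _
    have h5 : ‖ev (M *ᵥ (Mᵀ *ᵥ y))‖ ≤ spec M * r := spec_mulVec M _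
    calc r ^ 2 = y ⬝ᵥ (M *ᵥ (Mᵀ *ᵥ y)) := by rw [h1, h2]
      _ ≤ ‖ev y‖ * ‖ev (M *ᵥ (Mᵀ *ᵥ y))‖ := h3 ▸ h4
      _ ≤ ‖ev y‖ * (spec M * r) := mul_le_mul_of_nonneg_left h5 (norm_nonneg _)
  have : r * r ≤ (spec M * ‖ev y‖) * r := by
    calc r * r = r ^ 2 := (pow_two r).symm
      _ ≤ ‖ev y‖ * (spec M * r) := key
      _ = (spec M * ‖ev y‖) * r := by ring
  exact le_of_mul_le_mul_right this h0

lemma spec_add_le {m n : ℕ} (M N : Matrix (Fin m) (Fin n) ℝ) :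
    spec (M + N) ≤ spec M + spec N := by
  apply spec_le_bound _ (add_nonneg (spec_nonneg M) (spec_nonneg N))
  intro x
  rw [add_mulVec, ev_add]
  calc ‖ev (M *ᵥ x) + ev (N *ᵥ x)‖ ≤ ‖ev (M *ᵥ x)‖ + ‖ev (N *ᵥ x)‖ := norm_add_le _ _
    _ ≤ spec M * ‖ev x‖ + spec N * ‖ev x‖ := add_le_add (spec_mulVec _ _) (spec_mulVec _ _)
    _ = (spec M + spec N) * ‖ev x‖ := by ring

lemma spec_mul_le {m n k : ℕ} (M : Matrix (Fin m) (Fin n) ℝ) (N : Matrix (Fin n) (Fin k) ℝ) :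
    spec (M * N) ≤ spec M * spec N := by
  apply spec_le_bound _ (mul_nonneg (spec_nonneg _) (spec_nonneg _))
  intro x
  rw [← mulVec_mulVec]
  calc ‖ev (M *ᵥ (N *ᵥ x))‖ ≤ spec M * ‖ev (N *ᵥ x)‖ := spec_mulVec _ _
    _ ≤ spec M * (spec N * ‖ev x‖) :=
        mul_le_mul_of_nonneg_left (spec_mulVec _ _) (spec_nonneg _)
    _ = spec M * spec N * ‖ev x‖ := by ring

lemma spec_neg {m n : ℕ} (M : Matrix (Fin m) (Fin n) ℝ) : spec (-M) = spec M := by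
  unfold spec
  rw [map_neg, map_neg, norm_neg]

lemma dot_self_pos {k : ℕ} {v : Fin k → ℝ} (hv : v ≠ 0) : 0 < v ⬝ᵥ v := by
  have h0 : 0 ≤ v ⬝ᵥ v := by rw [← norm_ev_sq]; positivity
  rcases h0.eq_or_lt with h | h
  · exfalso
    apply hv
    apply dotProduct_star_self_eq_zero.mp
    simpa using h.symm
  · exact h

lemma mulVec_ne_zero {m n : ℕ} {A : Matrix (Fin m) (Fin n) ℝ} (hA : A.rank = n)
    {x : Fin n → ℝ} (hx : x ≠ 0) : A *ᵥ x ≠ 0 := by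
  have h1 : Module.finrank ℝ (LinearMap.range A.mulVecLin) +
      Module.finrank ℝ (LinearMap.ker A.mulVecLin) = Module.finrank ℝ (Fin n → ℝ) :=
    LinearMap.finrank_range_add_finrank_ker _
  rw [Matrix.rank] at hA
  have h2 : Module.finrank ℝ (Fin n → ℝ) = n := by simp
  have h3 : Module.finrank ℝ (LinearMap.ker A.mulVecLin) = 0 := by omega
  have hker : LinearMap.ker A.mulVecLin = ⊥ := Submodule.finrank_eq_zero.mp h3
  intro h
  apply hx
  have hmem : x ∈ LinearMap.ker A.mulVecLin := by
    simp [LinearMap.mem_ker, mulVecLin_apply, h]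
  rw [hker] at hmem
  simpa using hmem

lemma posdef_ata {m n : ℕ} {A : Matrix (Fin m) (Fin n) ℝ} (hA : A.rank = n) :
    (Aᵀ * A).PosDef := by
  refine posDef_iff_dotProduct_mulVec.mpr ⟨isHermitian_conjTranspose_mul_self A, fun x hx => ?_⟩
  rw [star_trivial, dot_transpose_mul]
  exact dot_self_pos (mulVec_ne_zero hA hx)


/-! ### Pure arithmetic helper lemmas -/

lemma le_of_sq_le {x y : ℝ} (hx : 0 ≤ x) (hy : 0 ≤ y) (h : x ^ 2 ≤ y ^ 2) : x ≤ y := by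
  nlinarith

lemma arith_b0 {s t γ₂ ε₁ ε₂ : ℝ} (h1 : 0 ≤ ε₁) (h2 : 0 ≤ ε₂)
    (hγ : γ₂ = 2 * 1 + 1 ^ 2 + (1 + 1) ^ 2 * (ε₁ + (1 + ε₁) * ε₂))
    (hκ : t * γ₂ < s) (hst : s ≤ t) (ht : 0 < t) : False := by
  have hS : 0 ≤ ε₁ + (1 + ε₁) * ε₂ := by
    have := mul_nonneg (by linarith : (0:ℝ) ≤ 1 + ε₁) h2
    linarith
  have hγ3 : 3 ≤ γ₂ := by rw [hγ]; linarith
  have := mul_le_mul_of_nonneg_left hγ3 ht.le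
  linarith

lemma arith_gh0 {s t γ₂ εA ε₁ ε₂ : ℝ} (hεA : 0 ≤ εA) (h1 : 1 ≤ ε₁) (h2 : 0 ≤ ε₂)
    (hγ : γ₂ = 2 * εA + εA ^ 2 + (1 + εA) ^ 2 * (ε₁ + (1 + ε₁) * ε₂))
    (hκ : t * γ₂ < s) (hst : s ≤ t) (ht : 0 < t) : False := by
  have hS : 1 ≤ ε₁ + (1 + ε₁) * ε₂ := by
    have := mul_nonneg (by linarith : (0:ℝ) ≤ 1 + ε₁) h2
    linarith
  have hP : 1 ≤ (1 + εA) ^ 2 := by nlinarith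
  have hprod : 1 ≤ (1 + εA) ^ 2 * (ε₁ + (1 + ε₁) * ε₂) := by
    calc (1:ℝ) = 1 * 1 := by ring
      _ ≤ (1 + εA) ^ 2 * (ε₁ + (1 + ε₁) * ε₂) :=
          mul_le_mul hP hS (by linarith) (by linarith)
  have hγ1 : 1 ≤ γ₂ := by rw [hγ]; nlinarith [sq_nonneg εA]
  have := mul_le_mul_of_nonneg_left hγ1 ht.le
  linarith

lemma arith_key {a e b gh g1 g2 s t γ₂ εA ε₁ ε₂ : ℝ}
    (ha : 0 < a) (hb : 0 ≤ b) (hgh : 0 ≤ gh)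
    (hεA : 0 ≤ εA) (hε₁ : 0 ≤ ε₁) (hε₂ : 0 ≤ ε₂)
    (he : e = εA * a) (hg1 : g1 = ε₁ * b ^ 2) (hg2 : g2 = ε₂ * gh)
    (hb_le : b ≤ (1 + εA) * a) (hgh_le : gh ≤ (1 + ε₁) * b ^ 2)
    (ha2t : a ^ 2 ≤ t)
    (hγ : γ₂ = 2 * εA + εA ^ 2 + (1 + εA) ^ 2 * (ε₁ + (1 + ε₁) * ε₂))
    (hκ : t * γ₂ < s) :
    2 * (a * e) + g1 + g2 < s := by
  have hb2 : b ^ 2 ≤ (1 + εA) ^ 2 * a ^ 2 := by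
    have h0 : b ^ 2 ≤ ((1 + εA) * a) ^ 2 := pow_le_pow_left₀ hb hb_le 2
    rwa [mul_pow] at h0
  have h1 : g1 ≤ ε₁ * ((1 + εA) ^ 2 * a ^ 2) := by
    rw [hg1]; exact mul_le_mul_of_nonneg_left hb2 hε₁
  have h2 : g2 ≤ ε₂ * ((1 + ε₁) * ((1 + εA) ^ 2 * a ^ 2)) := by
    rw [hg2]
    refine mul_le_mul_of_nonneg_left (hgh_le.trans ?_) hε₂
    exact mul_le_mul_of_nonneg_left hb2 (by linarith)
  have h3 : 2 * (a * e) = 2 * εA * a ^ 2 := by rw [he]; ring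
  have hγnn : 0 ≤ γ₂ := by
    have hS : 0 ≤ ε₁ + (1 + ε₁) * ε₂ := by
      have := mul_nonneg (by linarith : (0:ℝ) ≤ 1 + ε₁) hε₂
      linarith
    have := mul_nonneg (sq_nonneg (1 + εA)) hS
    rw [hγ]
    nlinarith [sq_nonneg εA]
  have h4 : γ₂ * a ^ 2 ≤ γ₂ * t := mul_le_mul_of_nonneg_left ha2t hγnn
  have h5 : 2 * εA * a ^ 2 + ε₁ * ((1 + εA) ^ 2 * a ^ 2) +
      ε₂ * ((1 + ε₁) * ((1 + εA) ^ 2 * a ^ 2)) ≤ γ₂ * a ^ 2 := by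
    rw [hγ]
    nlinarith [sq_nonneg (εA * a)]
  nlinarith

lemma arith_final {T0 q1 q2 s c g1 g2 X : ℝ}
    (hmain : s * X - 2 * c * X ≤ T0)
    (hq1 : -(g1 * X) ≤ q1) (hq2 : -(g2 * X) ≤ q2)
    (hkey : 2 * c + g1 + g2 < s) (hX : 0 < X) :
    0 < T0 + q1 + q2 := by
  nlinarith [mul_pos (show (0:ℝ) < s - (2 * c + g1 + g2) by linarith) hX]

set_option maxHeartbeats 1000000 in
/-- Theorem 2.2, positive definiteness: under the perturbed basic
Cholesky-QR model, if `κ(A)² γ₂ < 1` then `Ĝ + E₂` is symmetric positive definite. -/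
theorem stmt_2 {m n : ℕ} (A E : Matrix (Fin m) (Fin n) ℝ)
    (E₁ E₂ Ghat : Matrix (Fin n) (Fin n) ℝ)
    (hA : A.rank = n) (hE₁ : E₁ᵀ = E₁) (hE₂ : E₂ᵀ = E₂)
    (hG : Ghat = (A + E)ᵀ * (A + E) + E₁)
    (εA ε₁ ε₂ γ₂ : ℝ)
    (hεA : εA = spec E / spec A)
    (hε₁ : ε₁ = spec E₁ / spec (A + E) ^ 2)
    (hε₂ : ε₂ = spec E₂ / spec Ghat)
    (hγ₂ : γ₂ = 2 * εA + εA ^ 2 + (1 + εA) ^ 2 * (ε₁ + (1 + ε₁) * ε₂))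
    (hsmall : kappa A ^ 2 * γ₂ < 1) :
    (Ghat + E₂).PosDef := by
  -- the Hermitian part
  have hherm : (Ghat + E₂).IsHermitian := by
    unfold Matrix.IsHermitian
    rw [conjTranspose_eq_transpose_of_trivial, transpose_add, hG, transpose_add,
      transpose_mul, transpose_transpose, hE₁, hE₂]
  -- trivial case n = 0
  rcases Nat.eq_zero_or_pos n with hn0 | hn
  · subst hn0
    exact posDef_iff_dotProduct_mulVec.mpr ⟨hherm, fun x hx => absurd (Subsingleton.elim x 0) hx⟩
  -- eigenvalue setup
  set μ : Fin n → ℝ := (Matrix.isHermitian_conjTranspose_mul_self A).eigenvalues with hμ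
  set g : Fin n → ℝ := μ ∘ ⇑(Tuple.sort μ) with hg
  have hnn : n - 1 < n := Nat.sub_lt hn Nat.one_pos
  set s : ℝ := g ⟨0, hn⟩ with hs
  set t : ℝ := g ⟨n - 1, hnn⟩ with ht
  have hμpos : ∀ i, 0 < μ i := fun i => (posdef_ata hA).eigenvalues_pos i
  have hmono : Monotone g := Tuple.monotone_sort μ
  have hs_le : ∀ i, s ≤ μ i := by
    intro i
    have h1 : μ i = g ((Tuple.sort μ).symm i) := by simp [hg]
    rw [h1]
    exact hmono (by simp [Fin.le_def])
  have ht_ge : ∀ i, μ i ≤ t := by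
    intro i
    have h1 : μ i = g ((Tuple.sort μ).symm i) := by simp [hg]
    rw [h1]
    exact hmono (by simp [Fin.le_def]; exact Nat.le_sub_one_of_lt (Fin.is_lt _))
  have hs_pos : 0 < s := by
    have := hμpos (Tuple.sort μ ⟨0, hn⟩)
    simpa [hs, hg] using this
  have ht_pos : 0 < t := by
    have := hμpos (Tuple.sort μ ⟨n - 1, hnn⟩)
    simpa [ht, hg] using this
  have hst : s ≤ t := hmono (by simp [Fin.le_def])
  -- kappa
  have hrev1 : (⟨0, hn⟩ : Fin n).rev = ⟨n - 1, hnn⟩ := by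
    ext; simp [Fin.val_rev]
  have hrev2 : (⟨n - 1, hnn⟩ : Fin n).rev = ⟨0, hn⟩ := by
    ext; simp [Fin.val_rev]; omega
  have hsv1 : singularValues A ⟨0, hn⟩ = Real.sqrt t := by
    unfold singularValues
    rw [hrev1]
  have hsv2 : singularValues A ⟨n - 1, hnn⟩ = Real.sqrt s := by
    unfold singularValues
    rw [hrev2]
  have hkappa : kappa A = Real.sqrt t / Real.sqrt s := by
    rw [kappa, dif_pos hn, hsv1, hsv2]
  -- from the smallness hypothesis
  have hκ : t * γ₂ < s := by
    have h1 : kappa A ^ 2 = t / s := by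
      rw [hkappa, div_pow, Real.sq_sqrt ht_pos.le, Real.sq_sqrt hs_pos.le]
    rw [h1] at hsmall
    have h2 : t / s * γ₂ = (t * γ₂) / s := by ring
    rw [h2] at hsmall
    exact (div_lt_one hs_pos).mp hsmall
  -- Rayleigh bounds
  have hlow : ∀ x : Fin n → ℝ, s * (x ⬝ᵥ x) ≤ x ⬝ᵥ ((Aᵀ * A) *ᵥ x) :=
    fun x => rayleigh_low (Matrix.isHermitian_conjTranspose_mul_self A) hs_le x
  have hhigh : ∀ x : Fin n → ℝ, x ⬝ᵥ ((Aᵀ * A) *ᵥ x) ≤ t * (x ⬝ᵥ x) :=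
    fun x => rayleigh_high (Matrix.isHermitian_conjTranspose_mul_self A) ht_ge x
  set a : ℝ := spec A with ha
  set e : ℝ := spec E with he'
  have ha0 : 0 ≤ a := spec_nonneg A
  have he0 : 0 ≤ e := spec_nonneg E
  -- spec A ≤ √t hence a² ≤ t
  have hspecA_le : a ≤ Real.sqrt t := by
    apply spec_le_bound _ (Real.sqrt_nonneg t)
    intro x
    apply le_of_sq_le (norm_nonneg _)
      (mul_nonneg (Real.sqrt_nonneg t) (norm_nonneg _))
    rw [norm_ev_sq]
    calc (A *ᵥ x) ⬝ᵥ (A *ᵥ x) = x ⬝ᵥ ((Aᵀ * A) *ᵥ x) := (dot_transpose_mul A x).symm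
      _ ≤ t * (x ⬝ᵥ x) := hhigh x
      _ = (Real.sqrt t * ‖ev x‖) ^ 2 := by
          rw [mul_pow, Real.sq_sqrt ht_pos.le, norm_ev_sq]
  have ha2t : a ^ 2 ≤ t := by
    have h1 : a ^ 2 ≤ Real.sqrt t ^ 2 :=
      pow_le_pow_left₀ ha0 hspecA_le 2
    rwa [Real.sq_sqrt ht_pos.le] at h1
  -- a > 0
  have hsa2 : s ≤ a ^ 2 := by
    set x : Fin n → ℝ := Pi.single ⟨0, hn⟩ 1 with hx
    have hx1 : x ⬝ᵥ x = 1 := by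
      simp [hx, dotProduct, Pi.single_apply]
    have h1 : s * (x ⬝ᵥ x) ≤ (A *ᵥ x) ⬝ᵥ (A *ᵥ x) := by
      rw [← dot_transpose_mul]; exact hlow x
    have h2 : (A *ᵥ x) ⬝ᵥ (A *ᵥ x) ≤ (a * ‖ev x‖)^2 := by
      rw [← norm_ev_sq]
      exact pow_le_pow_left₀ (norm_nonneg _) (spec_mulVec A x) 2
    have h3 : ‖ev x‖ ^ 2 = (1:ℝ) := by rw [norm_ev_sq, hx1]
    rw [hx1, mul_one] at h1
    rw [mul_pow, h3, mul_one] at h2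
    linarith
  have ha_pos : 0 < a := by
    rcases ha0.eq_or_lt with h | h
    · exfalso; nlinarith
    · exact h
  -- epsilon facts
  have heεA : e = εA * a := by
    rw [hεA]; exact (div_mul_cancel₀ e ha_pos.ne').symm
  have hεA0 : 0 ≤ εA := by rw [hεA]; exact div_nonneg he0 ha0
  have hε₂0 : 0 ≤ ε₂ := by
    rw [hε₂]; exact div_nonneg (spec_nonneg E₂) (spec_nonneg Ghat)
  set b : ℝ := spec (A + E) with hb'
  have hb0 : 0 ≤ b := spec_nonneg _
  have hε₁0 : 0 ≤ ε₁ := by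
    rw [hε₁]; exact div_nonneg (spec_nonneg E₁) (sq_nonneg _)
  -- case b = 0
  rcases hb0.eq_or_lt with hbz | hb_pos
  · exfalso
    have hAE : A + E = 0 := eq_zero_of_spec_eq_zero hbz.symm
    have hEA : E = -A := eq_neg_of_add_eq_zero_right hAE
    have heq : e = a := by rw [he', ha, hEA]; exact spec_neg A
    have hεA1 : εA = 1 := by rw [hεA, heq]; exact div_self ha_pos.ne'
    rw [hεA1] at hγ₂
    exact arith_b0 hε₁0 hε₂0 hγ₂ hκ hst ht_pos
  -- now b > 0
  have hg1 : spec E₁ = ε₁ * b ^ 2 := by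
    rw [hε₁]; exact (div_mul_cancel₀ _ (pow_ne_zero 2 hb_pos.ne')).symm
  set gh : ℝ := spec Ghat with hgh'
  have hgh0 : 0 ≤ gh := spec_nonneg _
  rcases hgh0.eq_or_lt with hghz | hgh_pos
  · -- Ghat = 0 : contradiction
    exfalso
    have hG0 : Ghat = 0 := eq_zero_of_spec_eq_zero hghz.symm
    have hually : (A + E)ᵀ * (A + E) = -E₁ :=
      eq_neg_of_add_eq_zero_left (hG.symm.trans hG0)
    have hble : b ≤ Real.sqrt (spec E₁) := by
      apply spec_le_bound _ (Real.sqrt_nonneg _)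
      intro x
      apply le_of_sq_le (norm_nonneg _)
        (mul_nonneg (Real.sqrt_nonneg _) (norm_nonneg _))
      rw [norm_ev_sq, ← dot_transpose_mul, hually]
      have habs := quad_abs_le E₁ x
      have hneg : x ⬝ᵥ ((-E₁) *ᵥ x) = -(x ⬝ᵥ (E₁ *ᵥ x)) := by
        rw [neg_mulVec, dotProduct_neg]
      rw [hneg]
      have h2 : -(x ⬝ᵥ (E₁ *ᵥ x)) ≤ spec E₁ * ‖ev x‖ ^ 2 := by
        have h1 := (abs_le.mp habs).1
        linarith
      calc -(x ⬝ᵥ (E₁ *ᵥ x)) ≤ spec E₁ * ‖ev x‖ ^ 2 := h2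
        _ = (Real.sqrt (spec E₁) * ‖ev x‖)^2 := by
            rw [mul_pow, Real.sq_sqrt (spec_nonneg E₁)]
    have hb2 : b ^ 2 ≤ spec E₁ := by
      have h1 : b ^ 2 ≤ Real.sqrt (spec E₁) ^ 2 :=
        pow_le_pow_left₀ hb0 hble 2
      rwa [Real.sq_sqrt (spec_nonneg E₁)] at h1
    rw [hg1] at hb2
    have hε₁1 : 1 ≤ ε₁ := by
      have h1 : 1 * b ^ 2 ≤ ε₁ * b ^ 2 := by linarith
      exact le_of_mul_le_mul_right h1 (pow_pos hb_pos 2)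
    exact arith_gh0 hεA0 hε₁1 hε₂0 hγ₂ hκ hst ht_pos
  -- now gh > 0
  have hg2 : spec E₂ = ε₂ * gh := by
    rw [hε₂]; exact (div_mul_cancel₀ _ hgh_pos.ne').symm
  have hb_le : b ≤ (1 + εA) * a := by
    have h1 : b ≤ a + e := spec_add_le A E
    rw [heεA] at h1
    calc b ≤ a + εA * a := h1
      _ = (1 + εA) * a := by ring
  have hgh_le : gh ≤ (1 + ε₁) * b ^ 2 := by
    have h1 : gh ≤ spec ((A + E)ᵀ * (A + E)) + spec E₁ := by
      rw [hgh', hG]; exact spec_add_le _ _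
    have h2 : spec ((A + E)ᵀ * (A + E)) ≤ b ^ 2 := by
      calc spec ((A + E)ᵀ * (A + E)) ≤ spec (A + E)ᵀ * spec (A + E) := spec_mul_le _ _
        _ ≤ spec (A + E) * spec (A + E) :=
            mul_le_mul_of_nonneg_right (spec_transpose_le _) (spec_nonneg _)
        _ = b ^ 2 := by rw [← hb']; ring
    rw [hg1] at h1
    linarith
  -- key smallness
  have hkey : 2 * (a * e) + spec E₁ + spec E₂ < s :=
    arith_key ha_pos hb0 hgh0 hεA0 hε₁0 hε₂0 heεA hg1 hg2 hb_le hgh_le ha2t hγ₂ hκ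
  -- conclude positive definiteness
  refine posDef_iff_dotProduct_mulVec.mpr ⟨hherm, fun x hx => ?_⟩
  rw [star_trivial]
  have hXdot : ‖ev x‖ ^ 2 = x ⬝ᵥ x := norm_ev_sq x
  have hX_pos : 0 < ‖ev x‖ ^ 2 := by
    rw [hXdot]; exact dot_self_pos hx
  have hsplit : x ⬝ᵥ ((Ghat + E₂) *ᵥ x) =
      ‖ev ((A + E) *ᵥ x)‖ ^ 2 + x ⬝ᵥ (E₁ *ᵥ x) + x ⬝ᵥ (E₂ *ᵥ x) := by
    rw [hG, add_mulVec, dotProduct_add, add_mulVec, dotProduct_add,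
      dot_transpose_mul, ← norm_ev_sq]
  rw [hsplit]
  -- lower bound the main term
  have hmain : s * ‖ev x‖ ^ 2 - 2 * (a * e) * ‖ev x‖ ^ 2 ≤ ‖ev ((A + E) *ᵥ x)‖ ^ 2 := by
    have hAE : (A + E) *ᵥ x = A *ᵥ x + E *ᵥ x := add_mulVec _ _ _
    rw [hAE, ev_add]
    have hsq : ‖ev (A *ᵥ x) + ev (E *ᵥ x)‖ ^ 2 =
        ‖ev (A *ᵥ x)‖ ^ 2 + 2 * inner ℝ (ev (A *ᵥ x)) (ev (E *ᵥ x)) + ‖ev (E *ᵥ x)‖ ^ 2 :=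
      norm_add_sq_real _ _
    have hinner : -(‖ev (A *ᵥ x)‖ * ‖ev (E *ᵥ x)‖) ≤
        (inner ℝ (ev (A *ᵥ x)) (ev (E *ᵥ x)) : ℝ) :=
      (abs_le.mp (abs_real_inner_le_norm _ _)).1
    have hu2 : s * ‖ev x‖ ^ 2 ≤ ‖ev (A *ᵥ x)‖ ^ 2 := by
      rw [norm_ev_sq x, norm_ev_sq (A *ᵥ x), ← dot_transpose_mul]
      exact hlow x
    have hnu : ‖ev (A *ᵥ x)‖ ≤ a * ‖ev x‖ := spec_mulVec A x
    have hnv : ‖ev (E *ᵥ x)‖ ≤ e * ‖ev x‖ := spec_mulVec E x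
    have huv : ‖ev (A *ᵥ x)‖ * ‖ev (E *ᵥ x)‖ ≤ a * e * ‖ev x‖ ^ 2 := by
      have h1 := mul_le_mul hnu hnv (norm_nonneg _)
        (mul_nonneg ha0 (norm_nonneg _))
      calc ‖ev (A *ᵥ x)‖ * ‖ev (E *ᵥ x)‖ ≤ (a * ‖ev x‖) * (e * ‖ev x‖) := h1
        _ = a * e * ‖ev x‖ ^ 2 := by ring
    linarith [sq_nonneg ‖ev (E *ᵥ x)‖, hsq, hinner, hu2, huv]
  have hq1 : -(spec E₁ * ‖ev x‖ ^ 2) ≤ x ⬝ᵥ (E₁ *ᵥ x) :=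
    (abs_le.mp (quad_abs_le E₁ x)).1
  have hq2 : -(spec E₂ * ‖ev x‖ ^ 2) ≤ x ⬝ᵥ (E₂ *ᵥ x) :=
    (abs_le.mp (quad_abs_le E₂ x)).1
  exact arith_final hmain hq1 hq2 hkey hX_pos
end

section
/- Under the perturbed basic Cholesky-QR model, if κ(A)²γ₂ < 1 where γ₂ ≡ 2ε_A + ε_A² + (1+ε_A)²(ε₁ + (1+ε₁)ε₂), and if Ĝ + E₂ = R̂ᵀR̂ with R̂ ∈ ℝ^{n×n}, then R̂ is nonsingular and κ(R̂) ≤ κ(A) · sqrt((1+γ₂)/(1 − κ(A)²γ₂)). -/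
open Matrix

/-! ### Auxiliary machinery -/

open scoped Matrix.Norms.L2Operator RealInnerProductSpace

section Aux

variable {n : ℕ} {M : Matrix (Fin n) (Fin n) ℝ}

lemma spec_eq_l2norm {m n : ℕ} (M : Matrix (Fin m) (Fin n) ℝ) : spec M = ‖M‖ := rfl

lemma quad_decomp (hM : M.IsHermitian) (x : EuclideanSpace ℝ (Fin n)) :
    ⟪x, Matrix.toEuclideanLin M x⟫ =
      ∑ i, hM.eigenvalues i * (hM.eigenvectorBasis.repr x i)^2 := by
  set b := hM.eigenvectorBasis with hb
  have hrepr : ∀ i, b.repr (Matrix.toEuclideanLin M x) i = hM.eigenvalues i * b.repr x i := by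
    intro i
    have hsym : (Matrix.toEuclideanLin M).IsSymmetric :=
      Matrix.isHermitian_iff_isSymmetric.1 hM
    have hv : Matrix.toEuclideanLin M (b i) = hM.eigenvalues i • b i := by
      apply (WithLp.equiv 2 _).injective
      simpa [Matrix.ofLp_toEuclideanLin_apply] using hM.mulVec_eigenvectorBasis i
    rw [b.repr_apply_apply, b.repr_apply_apply, ← hsym (b i) x, hv]
    simp [real_inner_smul_left, Finset.mul_sum, mul_assoc]
  have h1 : ⟪x, Matrix.toEuclideanLin M x⟫ = ⟪b.repr x, b.repr (Matrix.toEuclideanLin M x)⟫ :=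
    (b.repr.inner_map_map x _).symm
  rw [h1]
  rw [EuclideanSpace.inner_eq_star_dotProduct]
  simp [dotProduct, hrepr, mul_comm, sq, mul_assoc, mul_left_comm]

/-- sorted eigenvalues -/
noncomputable def srt (hM : M.IsHermitian) : Fin n → ℝ :=
  hM.eigenvalues ∘ ⇑(Tuple.sort hM.eigenvalues)

lemma srt_mono (hM : M.IsHermitian) : Monotone (srt hM) := Tuple.monotone_sort _

lemma srt_bounds (hM : M.IsHermitian) (hn : 0 < n) (i : Fin n) :
    srt hM ⟨0, hn⟩ ≤ hM.eigenvalues i ∧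
      hM.eigenvalues i ≤ srt hM ⟨n - 1, Nat.sub_lt hn Nat.one_pos⟩ := by
  have h : hM.eigenvalues i = srt hM ((Tuple.sort hM.eigenvalues)⁻¹ i) := by
    simp [srt]
  rw [h]
  constructor
  · exact srt_mono hM (Fin.mk_le_of_le_val (Nat.zero_le _))
  · refine srt_mono hM ?_
    have := ((Tuple.sort hM.eigenvalues)⁻¹ i).isLt
    exact Fin.le_def.2 (by simp; omega)

lemma norm_sq_repr (hM : M.IsHermitian) (x : EuclideanSpace ℝ (Fin n)) :
    ‖x‖ ^ 2 = ∑ i, (hM.eigenvectorBasis.repr x i) ^ 2 := by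
  rw [← real_inner_self_eq_norm_sq, ← hM.eigenvectorBasis.repr.inner_map_map x x,
    EuclideanSpace.inner_eq_star_dotProduct]
  simp [dotProduct, sq]

lemma quad_le_max (hM : M.IsHermitian) (hn : 0 < n) (x : EuclideanSpace ℝ (Fin n)) :
    ⟪x, Matrix.toEuclideanLin M x⟫ ≤ srt hM ⟨n - 1, Nat.sub_lt hn Nat.one_pos⟩ * ‖x‖ ^ 2 := by
  rw [quad_decomp hM, norm_sq_repr hM, Finset.mul_sum]
  exact Finset.sum_le_sum fun i _ =>
    mul_le_mul_of_nonneg_right ((srt_bounds hM hn i).2) (sq_nonneg _)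

lemma min_le_quad (hM : M.IsHermitian) (hn : 0 < n) (x : EuclideanSpace ℝ (Fin n)) :
    srt hM ⟨0, hn⟩ * ‖x‖ ^ 2 ≤ ⟪x, Matrix.toEuclideanLin M x⟫ := by
  rw [quad_decomp hM, norm_sq_repr hM, Finset.mul_sum]
  exact Finset.sum_le_sum fun i _ =>
    mul_le_mul_of_nonneg_right ((srt_bounds hM hn i).1) (sq_nonneg _)

lemma quad_attained (hM : M.IsHermitian) (j : Fin n) :
    ∃ v : EuclideanSpace ℝ (Fin n), ‖v‖ = 1 ∧
      Matrix.toEuclideanLin M v = srt hM j • v ∧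
      ⟪v, Matrix.toEuclideanLin M v⟫ = srt hM j := by
  set v := hM.eigenvectorBasis (Tuple.sort hM.eigenvalues j) with hvdef
  have hnorm : ‖v‖ = 1 := hM.eigenvectorBasis.orthonormal.1 _
  have hv : Matrix.toEuclideanLin M v = srt hM j • v := by
    apply (WithLp.equiv 2 _).injective
    simpa [Matrix.ofLp_toEuclideanLin_apply, srt, hvdef] using
      hM.mulVec_eigenvectorBasis (Tuple.sort hM.eigenvalues j)
  refine ⟨v, hnorm, hv, ?_⟩
  rw [hv, real_inner_smul_right, real_inner_self_eq_norm_sq, hnorm]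
  ring

lemma abs_quad_le (N : Matrix (Fin n) (Fin n) ℝ) (x : EuclideanSpace ℝ (Fin n)) :
    |⟪x, Matrix.toEuclideanLin N x⟫| ≤ ‖N‖ * ‖x‖ ^ 2 := by
  calc |⟪x, Matrix.toEuclideanLin N x⟫| ≤ ‖x‖ * ‖Matrix.toEuclideanLin N x‖ :=
        abs_real_inner_le_norm _ _
    _ ≤ ‖x‖ * (‖N‖ * ‖x‖) := by
        refine mul_le_mul_of_nonneg_left ?_ (norm_nonneg _)
        exact (LinearMap.toContinuousLinearMap (Matrix.toEuclideanLin N)).le_opNorm x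
    _ = ‖N‖ * ‖x‖ ^ 2 := by ring

lemma quad_gram {m : ℕ} (B : Matrix (Fin m) (Fin n) ℝ) (x : EuclideanSpace ℝ (Fin n)) :
    ⟪x, Matrix.toEuclideanLin (Bᴴ * B) x⟫ = ‖Matrix.toEuclideanLin B x‖ ^ 2 := by
  have h1 : Matrix.toEuclideanLin (Bᴴ * B) x
      = Matrix.toEuclideanLin Bᴴ (Matrix.toEuclideanLin B x) := by
    simp [Matrix.toEuclideanLin_apply, Matrix.mulVec_mulVec]
  rw [h1, Matrix.toEuclideanLin_conjTranspose_eq_adjoint, LinearMap.adjoint_inner_right,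
    real_inner_self_eq_norm_sq]

/-- Weyl at the top. -/
lemma srt_max_sub_le (S T : Matrix (Fin n) (Fin n) ℝ) (hS : S.IsHermitian)
    (hT : T.IsHermitian) (hn : 0 < n) :
    srt hT ⟨n - 1, Nat.sub_lt hn Nat.one_pos⟩ ≤
      srt hS ⟨n - 1, Nat.sub_lt hn Nat.one_pos⟩ + ‖T - S‖ := by
  obtain ⟨v, hv1, -, hvq⟩ := quad_attained hT ⟨n - 1, Nat.sub_lt hn Nat.one_pos⟩
  have hsplit : ⟪v, Matrix.toEuclideanLin (T - S) v⟫
      = ⟪v, Matrix.toEuclideanLin T v⟫ - ⟪v, Matrix.toEuclideanLin S v⟫ := by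
    rw [map_sub, LinearMap.sub_apply, inner_sub_right]
  have h1 := quad_le_max hS hn v
  have h2 := (abs_le.1 (abs_quad_le (T - S) v)).2
  rw [hv1] at h1 h2
  nlinarith [hvq, hsplit]

/-- Weyl at the bottom. -/
lemma le_srt_min_sub (S T : Matrix (Fin n) (Fin n) ℝ) (hS : S.IsHermitian)
    (hT : T.IsHermitian) (hn : 0 < n) :
    srt hS ⟨0, hn⟩ - ‖T - S‖ ≤ srt hT ⟨0, hn⟩ := by
  obtain ⟨v, hv1, -, hvq⟩ := quad_attained hT ⟨0, hn⟩
  have hsplit : ⟪v, Matrix.toEuclideanLin (T - S) v⟫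
      = ⟪v, Matrix.toEuclideanLin T v⟫ - ⟪v, Matrix.toEuclideanLin S v⟫ := by
    rw [map_sub, LinearMap.sub_apply, inner_sub_right]
  have h1 := min_le_quad hS hn v
  have h2 := (abs_le.1 (abs_quad_le (T - S) v)).1
  rw [hv1] at h1 h2
  nlinarith [hvq, hsplit]

lemma srt_gram_nonneg {m : ℕ} (B : Matrix (Fin m) (Fin n) ℝ) (j : Fin n) :
    0 ≤ srt (Matrix.isHermitian_conjTranspose_mul_self B) j := by
  obtain ⟨v, hv1, -, hvq⟩ := quad_attained (Matrix.isHermitian_conjTranspose_mul_self B) j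
  rw [← hvq, quad_gram]
  positivity

/-- operator norm squared is the max eigenvalue of the Gram matrix. -/
lemma norm_sq_eq_srt_max {m : ℕ} (B : Matrix (Fin m) (Fin n) ℝ) (hn : 0 < n) :
    ‖B‖ ^ 2 = srt (Matrix.isHermitian_conjTranspose_mul_self B) ⟨n - 1, Nat.sub_lt hn Nat.one_pos⟩ := by
  set hG := Matrix.isHermitian_conjTranspose_mul_self B
  set μ := srt hG ⟨n - 1, Nat.sub_lt hn Nat.one_pos⟩ with hμ
  have hμ0 : 0 ≤ μ := srt_gram_nonneg B _
  have hle : ‖B‖ ≤ Real.sqrt μ := by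
    rw [Matrix.l2_opNorm_def]
    apply ContinuousLinearMap.opNorm_le_bound _ (Real.sqrt_nonneg μ)
    intro x
    have h1 : ‖Matrix.toEuclideanLin B x‖ ^ 2 ≤ μ * ‖x‖ ^ 2 := by
      rw [← quad_gram]; exact quad_le_max hG hn x
    have := Real.sqrt_le_sqrt h1
    rwa [Real.sqrt_mul hμ0, Real.sqrt_sq (norm_nonneg _), Real.sqrt_sq (norm_nonneg _)] at this
  have hge : Real.sqrt μ ≤ ‖B‖ := by
    obtain ⟨v, hv1, -, hvq⟩ := quad_attained hG ⟨n - 1, Nat.sub_lt hn Nat.one_pos⟩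
    have h1 : ‖Matrix.toEuclideanLin B v‖ ^ 2 = μ := by rw [← quad_gram, hvq]
    have h2 : ‖Matrix.toEuclideanLin B v‖ ≤ ‖B‖ * ‖v‖ :=
      (LinearMap.toContinuousLinearMap (Matrix.toEuclideanLin B)).le_opNorm v
    rw [hv1, mul_one] at h2
    calc Real.sqrt μ = ‖Matrix.toEuclideanLin B v‖ := by rw [← h1, Real.sqrt_sq (norm_nonneg _)]
      _ ≤ ‖B‖ := h2
  have : ‖B‖ = Real.sqrt μ := le_antisymm hle hge
  rw [this, Real.sq_sqrt hμ0]

/-- rank `n` implies the smallest eigenvalue of the Gram matrix is positive -/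
lemma srt_gram_pos {m : ℕ} (B : Matrix (Fin m) (Fin n) ℝ) (hn : 0 < n) (hr : B.rank = n) :
    0 < srt (Matrix.isHermitian_conjTranspose_mul_self B) ⟨0, hn⟩ := by
  rcases lt_or_eq_of_le (srt_gram_nonneg B ⟨0, hn⟩) with h | h
  · exact h
  exfalso
  obtain ⟨v, hv1, -, hvq⟩ := quad_attained (Matrix.isHermitian_conjTranspose_mul_self B) ⟨0, hn⟩
  rw [← h] at hvq
  rw [quad_gram] at hvq
  have hBv : Matrix.toEuclideanLin B v = 0 := by
    have h2 : ‖Matrix.toEuclideanLin B v‖ ^ 2 = 0 := hvq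
    exact norm_eq_zero.1 (sq_eq_zero_iff.1 h2)
  have hker : B.mulVecLin ((WithLp.equiv 2 _) v) = 0 := by
    have := congrArg (WithLp.equiv 2 (Fin m → ℝ)) hBv
    simpa [Matrix.ofLp_toEuclideanLin_apply, Matrix.mulVecLin] using this
  have hv0 : (WithLp.equiv 2 (Fin n → ℝ)) v ≠ 0 := by
    intro h0
    have : v = 0 := (WithLp.equiv 2 _).injective (by simpa using h0)
    rw [this, norm_zero] at hv1; exact one_ne_zero hv1.symm
  have hrn : Module.finrank ℝ (LinearMap.range B.mulVecLin) = n := hr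
  have hrk := LinearMap.finrank_range_add_finrank_ker B.mulVecLin
  rw [hrn] at hrk
  have hfin : Module.finrank ℝ (Fin n → ℝ) = n := by simp
  rw [hfin] at hrk
  have hker0 : Module.finrank ℝ (LinearMap.ker B.mulVecLin) = 0 := by omega
  have hmem : (WithLp.equiv 2 (Fin n → ℝ)) v ∈ LinearMap.ker B.mulVecLin := hker
  rw [Submodule.finrank_eq_zero.1 hker0] at hmem
  exact hv0 (Submodule.mem_bot ℝ |>.1 hmem)

end Aux


lemma arith_bound (εA ε₁ ε₂ γ₂ nA nE nAE nG n1 n2 : ℝ)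
    (hεA0 : 0 ≤ εA) (hε₁0 : 0 ≤ ε₁) (hε₂0 : 0 ≤ ε₂)
    (hγ : γ₂ = 2 * εA + εA ^ 2 + (1 + εA) ^ 2 * (ε₁ + (1 + ε₁) * ε₂))
    (hnA : 0 ≤ nA) (hnAE : 0 ≤ nAE) (hnG : 0 ≤ nG)
    (hE : nE = εA * nA) (h1 : n1 = ε₁ * nAE ^ 2) (h2 : n2 = ε₂ * nG)
    (hAE : nAE ≤ (1 + εA) * nA) (hG : nG ≤ (1 + ε₁) * nAE ^ 2) :
    nA * nE + nE * nA + nE * nE + n1 + n2 ≤ γ₂ * nA ^ 2 := by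
  have hAE2 : nAE ^ 2 ≤ (1 + εA) ^ 2 * nA ^ 2 := by nlinarith
  have t1 : n1 ≤ ε₁ * ((1 + εA) ^ 2 * nA ^ 2) := by
    rw [h1]; exact mul_le_mul_of_nonneg_left hAE2 hε₁0
  have t2 : n2 ≤ ε₂ * ((1 + ε₁) * ((1 + εA) ^ 2 * nA ^ 2)) := by
    rw [h2]
    refine mul_le_mul_of_nonneg_left (hG.trans ?_) hε₂0
    exact mul_le_mul_of_nonneg_left hAE2 (by linarith)
  nlinarith [t1, t2]

set_option maxHeartbeats 1600000 in
/-- Theorem 2.2, condition number of the computed Cholesky factor: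
since `A` has a thin QR factorization `A = QR` with `κ(R) = κ(A)`, the bound
`κ(R̂) ≤ κ(R)·sqrt((1+γ₂)/(1−κ(A)²γ₂))` is stated with `κ(R)` replaced by `κ(A)`. -/
theorem stmt_3 {m n : ℕ} (A E : Matrix (Fin m) (Fin n) ℝ)
    (E₁ E₂ Ghat Rhat : Matrix (Fin n) (Fin n) ℝ)
    (hA : A.rank = n) (hE₁ : E₁ᵀ = E₁) (hE₂ : E₂ᵀ = E₂)
    (hG : Ghat = (A + E)ᵀ * (A + E) + E₁)
    (εA ε₁ ε₂ γ₂ : ℝ)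
    (hεA : εA = spec E / spec A)
    (hε₁ : ε₁ = spec E₁ / spec (A + E) ^ 2)
    (hε₂ : ε₂ = spec E₂ / spec Ghat)
    (hγ₂ : γ₂ = 2 * εA + εA ^ 2 + (1 + εA) ^ 2 * (ε₁ + (1 + ε₁) * ε₂))
    (hsmall : kappa A ^ 2 * γ₂ < 1)
    (hchol : Ghat + E₂ = Rhatᵀ * Rhat) :
    IsUnit Rhat.det ∧
      kappa Rhat ≤ kappa A * Real.sqrt ((1 + γ₂) / (1 - kappa A ^ 2 * γ₂)) := by
  classical
  simp only [spec_eq_l2norm] at hεA hε₁ hε₂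
  have hεA0 : 0 ≤ εA := hεA ▸ div_nonneg (norm_nonneg _) (norm_nonneg _)
  have hε₁0 : 0 ≤ ε₁ := hε₁ ▸ div_nonneg (norm_nonneg _) (by positivity)
  have hε₂0 : 0 ≤ ε₂ := hε₂ ▸ div_nonneg (norm_nonneg _) (norm_nonneg _)
  have hγ₂0 : 0 ≤ γ₂ := by
    have h1 : 0 ≤ ε₁ + (1 + ε₁) * ε₂ := by nlinarith
    nlinarith [mul_nonneg (sq_nonneg (1 + εA)) h1, sq_nonneg εA]
  rcases Nat.eq_zero_or_pos n with hn0 | hn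
  · subst hn0
    constructor
    · simp [Matrix.det_fin_zero]
    · have hkR : kappa Rhat = 1 := dif_neg (lt_irrefl 0)
      have hkA : kappa A = 1 := dif_neg (lt_irrefl 0)
      rw [hkR, hkA, one_mul]
      rw [hkA] at hsmall
      have hγlt : γ₂ < 1 := by nlinarith
      have harg : 1 ≤ (1 + γ₂) / (1 - 1 ^ 2 * γ₂) := by
        rw [one_pow, one_mul]
        rw [le_div_iff₀ (by linarith)]
        linarith
      calc (1:ℝ) = Real.sqrt 1 := Real.sqrt_one.symm
        _ ≤ _ := Real.sqrt_le_sqrt (by simpa using harg)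
  -- main case
  set hSA := Matrix.isHermitian_conjTranspose_mul_self A with hSAdef
  set hST := Matrix.isHermitian_conjTranspose_mul_self Rhat with hSTdef
  set lo : Fin n := ⟨0, hn⟩ with hlo
  set hi : Fin n := ⟨n - 1, Nat.sub_lt hn Nat.one_pos⟩ with hhi
  set a := srt hSA hi with ha_def
  set b := srt hSA lo with hb_def
  set ta := srt hST hi with hta_def
  set tb := srt hST lo with htb_def
  have hb : 0 < b := srt_gram_pos A hn hA
  have hba : b ≤ a := srt_mono hSA (by rw [hlo, hhi]; exact Fin.mk_le_of_le_val (Nat.zero_le _))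
  have ha : 0 < a := lt_of_lt_of_le hb hba
  have hnormA : ‖A‖ ^ 2 = a := norm_sq_eq_srt_max A hn
  have hApos : 0 < ‖A‖ := by nlinarith [norm_nonneg A]
  -- rev computations
  have hrevlo : lo.rev = hi := by
    apply Fin.ext
    simp [Fin.val_rev, hlo, hhi]
  have hrevhi : hi.rev = lo := by
    apply Fin.ext
    simp [Fin.val_rev, hlo, hhi]
    omega
  have hsv : ∀ {m' : ℕ} (M : Matrix (Fin m') (Fin n) ℝ) (i : Fin n),
      singularValues M i = Real.sqrt (srt (Matrix.isHermitian_conjTranspose_mul_self M) i.rev) :=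
    fun M i => rfl
  have hkA : kappa A = Real.sqrt a / Real.sqrt b := by
    rw [kappa, dif_pos hn, hsv A, hsv A]
    rw [show (⟨0, hn⟩ : Fin n) = lo from rfl, show (⟨n-1, Nat.sub_lt hn Nat.one_pos⟩ : Fin n) = hi from rfl,
      hrevlo, hrevhi]
  have hkA2 : kappa A ^ 2 = a / b := by
    rw [hkA, div_pow, Real.sq_sqrt ha.le, Real.sq_sqrt hb.le]
  have hkA1 : 1 ≤ kappa A := by
    rw [hkA, le_div_iff₀ (Real.sqrt_pos.2 hb), one_mul]
    exact Real.sqrt_le_sqrt hba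
  have hdenpos : 0 < 1 - kappa A ^ 2 * γ₂ := by linarith
  have haeq : a = kappa A ^ 2 * b := by rw [hkA2]; field_simp
  -- exclude degenerate cases
  have hE : ‖E‖ = εA * ‖A‖ := by rw [hεA]; field_simp
  by_cases hAE0 : ‖A + E‖ = 0
  · exfalso
    have hAE : A + E = 0 := norm_eq_zero.1 hAE0
    have hE' : E = -A := eq_neg_of_add_eq_zero_right hAE
    have hEA : ‖E‖ = ‖A‖ := by rw [hE', norm_neg]
    have hεA1 : εA = 1 := by rw [hεA, hEA, div_self hApos.ne']
    have hγ3 : 3 ≤ γ₂ := by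
      rw [hγ₂, hεA1]
      nlinarith
    nlinarith [sq_nonneg (kappa A - 1)]
  have hAEpos : 0 < ‖A + E‖ := lt_of_le_of_ne (norm_nonneg _) (Ne.symm hAE0)
  have hG' : Ghat = (A + E)ᴴ * (A + E) + E₁ := hG
  by_cases hG0 : ‖Ghat‖ = 0
  · exfalso
    have hGhat : Ghat = 0 := norm_eq_zero.1 hG0
    have hE₁eq : E₁ = -((A + E)ᴴ * (A + E)) := by
      rw [hGhat] at hG'
      exact eq_neg_of_add_eq_zero_right hG'.symm
    have hE₁n : ‖E₁‖ = ‖A + E‖ * ‖A + E‖ := by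
      rw [hE₁eq, norm_neg, Matrix.l2_opNorm_conjTranspose_mul_self]
    have hε₁1 : ε₁ = 1 := by
      rw [hε₁, hE₁n, sq, div_self (by positivity)]
    have hγ1 : 1 ≤ γ₂ := by
      rw [hγ₂, hε₁1]
      nlinarith
    nlinarith [sq_nonneg (kappa A - 1)]
  have hGpos : 0 < ‖Ghat‖ := lt_of_le_of_ne (norm_nonneg _) (Ne.symm hG0)
  -- norm identities
  have hE1 : ‖E₁‖ = ε₁ * ‖A + E‖ ^ 2 := by rw [hε₁]; field_simp
  have hE2 : ‖E₂‖ = ε₂ * ‖Ghat‖ := by rw [hε₂]; field_simp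
  have hAE_le : ‖A + E‖ ≤ (1 + εA) * ‖A‖ := by
    calc ‖A + E‖ ≤ ‖A‖ + ‖E‖ := norm_add_le _ _
      _ = (1 + εA) * ‖A‖ := by rw [hE]; ring
  have hAE2 : ‖A + E‖ ^ 2 ≤ (1 + εA) ^ 2 * ‖A‖ ^ 2 := by nlinarith [hAEpos.le]
  have hGh_le : ‖Ghat‖ ≤ (1 + ε₁) * ‖A + E‖ ^ 2 := by
    calc ‖Ghat‖ ≤ ‖(A + E)ᴴ * (A + E)‖ + ‖E₁‖ := by rw [hG']; exact norm_add_le _ _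
      _ = ‖A + E‖ * ‖A + E‖ + ε₁ * ‖A + E‖ ^ 2 := by
          rw [Matrix.l2_opNorm_conjTranspose_mul_self, hE1]
      _ = (1 + ε₁) * ‖A + E‖ ^ 2 := by ring
  -- the perturbation
  have hchol' : Ghat + E₂ = Rhatᴴ * Rhat := hchol
  have hΔeq : Rhatᴴ * Rhat - Aᴴ * A = Aᴴ * E + Eᴴ * A + Eᴴ * E + E₁ + E₂ := by
    rw [← hchol', hG']
    simp only [Matrix.conjTranspose_add, Matrix.add_mul, Matrix.mul_add]
    abel
  have hΔ_le : ‖Rhatᴴ * Rhat - Aᴴ * A‖ ≤ ‖A‖ * ‖E‖ + ‖E‖ * ‖A‖ + ‖E‖ * ‖E‖ + ‖E₁‖ + ‖E₂‖ := by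
    rw [hΔeq]
    have h1 : ‖Aᴴ * E‖ ≤ ‖A‖ * ‖E‖ := by
      have := Matrix.l2_opNorm_mul Aᴴ E
      rwa [Matrix.l2_opNorm_conjTranspose] at this
    have h2 : ‖Eᴴ * A‖ ≤ ‖E‖ * ‖A‖ := by
      have := Matrix.l2_opNorm_mul Eᴴ A
      rwa [Matrix.l2_opNorm_conjTranspose] at this
    have h3 : ‖Eᴴ * E‖ ≤ ‖E‖ * ‖E‖ := by
      have := Matrix.l2_opNorm_mul Eᴴ E
      rwa [Matrix.l2_opNorm_conjTranspose] at this
    calc ‖Aᴴ * E + Eᴴ * A + Eᴴ * E + E₁ + E₂‖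
        ≤ ‖Aᴴ * E + Eᴴ * A + Eᴴ * E + E₁‖ + ‖E₂‖ := norm_add_le _ _
      _ ≤ (‖Aᴴ * E + Eᴴ * A + Eᴴ * E‖ + ‖E₁‖) + ‖E₂‖ := by
          gcongr; exact norm_add_le _ _
      _ ≤ ((‖Aᴴ * E + Eᴴ * A‖ + ‖Eᴴ * E‖) + ‖E₁‖) + ‖E₂‖ := by
          gcongr; exact norm_add_le _ _
      _ ≤ (((‖Aᴴ * E‖ + ‖Eᴴ * A‖) + ‖Eᴴ * E‖) + ‖E₁‖) + ‖E₂‖ := by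
          gcongr; exact norm_add_le _ _
      _ ≤ ‖A‖ * ‖E‖ + ‖E‖ * ‖A‖ + ‖E‖ * ‖E‖ + ‖E₁‖ + ‖E₂‖ := by linarith [h1, h2, h3]
  have hΔγ : ‖Rhatᴴ * Rhat - Aᴴ * A‖ ≤ γ₂ * a := by
    calc ‖Rhatᴴ * Rhat - Aᴴ * A‖ ≤ ‖A‖ * ‖E‖ + ‖E‖ * ‖A‖ + ‖E‖ * ‖E‖ + ‖E₁‖ + ‖E₂‖ := hΔ_le
      _ ≤ γ₂ * ‖A‖ ^ 2 :=
          arith_bound εA ε₁ ε₂ γ₂ ‖A‖ ‖E‖ ‖A + E‖ ‖Ghat‖ ‖E₁‖ ‖E₂‖ hεA0 hε₁0 hε₂0 hγ₂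
            (norm_nonneg _) (norm_nonneg _) (norm_nonneg _) hE hE1 hE2 hAE_le hGh_le
      _ = γ₂ * a := by rw [hnormA]
  -- eigenvalue bounds
  have htaub : ta ≤ a * (1 + γ₂) := by
    have := srt_max_sub_le (Aᴴ * A) (Rhatᴴ * Rhat) hSA hST hn
    have h2 : ta ≤ a + ‖Rhatᴴ * Rhat - Aᴴ * A‖ := this
    nlinarith
  have htblb : b * (1 - kappa A ^ 2 * γ₂) ≤ tb := by
    have := le_srt_min_sub (Aᴴ * A) (Rhatᴴ * Rhat) hSA hST hn
    have h2 : b - ‖Rhatᴴ * Rhat - Aᴴ * A‖ ≤ tb := this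
    nlinarith [haeq]
  have htb_pos : 0 < tb := lt_of_lt_of_le (by positivity) htblb
  have hta_pos : 0 < ta := by
    have : tb ≤ ta := srt_mono hST (by rw [hlo, hhi]; exact Fin.mk_le_of_le_val (Nat.zero_le _))
    linarith
  constructor
  · -- determinant
    have heigpos : ∀ i, 0 < hST.eigenvalues i := fun i =>
      lt_of_lt_of_le htb_pos ((srt_bounds hST hn i).1)
    have hdet : 0 < (Rhatᴴ * Rhat).det := by
      rw [hST.det_eq_prod_eigenvalues]
      exact Finset.prod_pos fun i _ => heigpos i
    have hdet2 : (Rhatᴴ * Rhat).det = Rhat.det * Rhat.det := by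
      rw [Matrix.det_mul, Matrix.det_conjTranspose]
      simp
    rw [hdet2] at hdet
    have : Rhat.det ≠ 0 := by intro h0; rw [h0] at hdet; simp at hdet
    exact isUnit_iff_ne_zero.2 this
  · -- condition number bound
    have hkR : kappa Rhat = Real.sqrt ta / Real.sqrt tb := by
      rw [kappa, dif_pos hn, hsv Rhat, hsv Rhat]
      rw [show (⟨0, hn⟩ : Fin n) = lo from rfl,
        show (⟨n-1, Nat.sub_lt hn Nat.one_pos⟩ : Fin n) = hi from rfl, hrevlo, hrevhi]
    rw [hkR]
    have hnum : Real.sqrt ta ≤ Real.sqrt (a * (1 + γ₂)) := Real.sqrt_le_sqrt htaub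
    have hden : Real.sqrt (b * (1 - kappa A ^ 2 * γ₂)) ≤ Real.sqrt tb :=
      Real.sqrt_le_sqrt htblb
    have hdenpos' : 0 < Real.sqrt (b * (1 - kappa A ^ 2 * γ₂)) :=
      Real.sqrt_pos.2 (by positivity)
    calc Real.sqrt ta / Real.sqrt tb
        ≤ Real.sqrt (a * (1 + γ₂)) / Real.sqrt (b * (1 - kappa A ^ 2 * γ₂)) := by
          apply div_le_div₀ (Real.sqrt_nonneg _) hnum hdenpos' hden
      _ = kappa A * Real.sqrt ((1 + γ₂) / (1 - kappa A ^ 2 * γ₂)) := by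
          rw [Real.sqrt_mul ha.le, Real.sqrt_mul hb.le,
            Real.sqrt_div (by linarith : (0:ℝ) ≤ 1 + γ₂), hkA]
          rw [div_mul_div_comm]
end

section
/- Let A ∈ ℝ^{m×n} with rank(A) = n and thin QR factorization A = QR (QᵀQ = Iₙ, R ∈ ℝ^{n×n} nonsingular). Let F ∈ ℝ^{m×m} be orthogonal and S ∈ ℝ^{c×m}, and suppose A_s ≡ S F A has rank(A_s) = n with thin QR factorization A_s = Q_s R_s (Q_sᵀQ_s = Iₙ, R_s ∈ ℝ^{n×n} nonsingular). Set A₁ = A R_s⁻¹. Then the singular values satisfy σ_i(S F Q) = 1/σ_{n−i+1}(A₁) for 1 ≤ i ≤ n, and consequently κ(S F Q) = κ(A₁). -/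
open Matrix

section Aux

open Polynomial

variable {n : ℕ}

lemma charpoly_diag (d : Fin n → ℝ) :
    (Matrix.diagonal d).charpoly = ∏ i, (X - C (d i)) := by
  have h : charmatrix (Matrix.diagonal d) = Matrix.diagonal (fun i => X - C (d i)) := by
    ext i j
    by_cases hij : i = j
    · subst hij; simp [charmatrix_apply_eq]
    · simp [charmatrix_apply_ne _ _ _ hij, Matrix.diagonal_apply_ne _ hij]
  rw [Matrix.charpoly, h, Matrix.det_diagonal]

lemma charpoly_conj (P M : Matrix (Fin n) (Fin n) ℝ) (hP : IsUnit P.det) :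
    (P * M * P⁻¹).charpoly = M.charpoly := by
  have hinv : P * P⁻¹ = 1 := Matrix.mul_nonsing_inv P hP
  let f : Matrix (Fin n) (Fin n) ℝ →+* Matrix (Fin n) (Fin n) ℝ[X] := (C : ℝ →+* ℝ[X]).mapMatrix
  have key : charmatrix (P * M * P⁻¹) = f P * charmatrix M * f P⁻¹ := by
    show Matrix.scalar (Fin n) X - f (P * M * P⁻¹) = f P * (Matrix.scalar (Fin n) X - f M) * f P⁻¹
    have h1 : f P * f M * f P⁻¹ = f (P * M * P⁻¹) := by
      rw [← RingHom.map_mul f, ← RingHom.map_mul f]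
    have h2 : f P * Matrix.scalar (Fin n) X * f P⁻¹ = Matrix.scalar (Fin n) X := by
      rw [← (Matrix.scalar_commute (X : ℝ[X]) (fun r' => Commute.all _ _) (f P)).eq,
        mul_assoc, ← RingHom.map_mul f, hinv, RingHom.map_one f, mul_one]
    rw [mul_sub, sub_mul, h1, h2]
  rw [Matrix.charpoly, key, Matrix.det_mul, Matrix.det_mul, mul_right_comm,
    ← Matrix.det_mul, ← RingHom.map_mul f, hinv, RingHom.map_one f, Matrix.det_one, one_mul,
    Matrix.charpoly]

lemma herm_charpoly (M : Matrix (Fin n) (Fin n) ℝ) (hM : M.IsHermitian) :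
    M.charpoly = ∏ i, (X - C (hM.eigenvalues i)) := by
  set U : Matrix (Fin n) (Fin n) ℝ := (hM.eigenvectorUnitary : Matrix (Fin n) (Fin n) ℝ) with hU
  have hU1 : U * star U = 1 := Matrix.mem_unitaryGroup_iff.mp hM.eigenvectorUnitary.2
  have hUinv : U⁻¹ = star U := Matrix.inv_eq_right_inv hU1
  have hUdet : IsUnit U.det := by
    apply Matrix.isUnit_det_of_right_inverse hU1
  have hspec : M = U * Matrix.diagonal hM.eigenvalues * U⁻¹ := by
    rw [hUinv]
    have := hM.spectral_theorem
    simpa [RCLike.ofReal_real_eq_id] using this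
  conv_lhs => rw [hspec]
  rw [charpoly_conj _ _ hUdet, charpoly_diag]

lemma herm_roots (M : Matrix (Fin n) (Fin n) ℝ) (hM : M.IsHermitian) :
    M.charpoly.roots = Finset.univ.val.map hM.eigenvalues := by
  have e1 : Multiset.map (fun i => X - C (hM.eigenvalues i)) Finset.univ.val
      = Multiset.map (fun a => X - C a) (Multiset.map hM.eigenvalues Finset.univ.val) := by
    rw [Multiset.map_map]; rfl
  rw [herm_charpoly M hM, Finset.prod_eq_multiset_prod, e1,
    Polynomial.roots_multiset_prod_X_sub_C]

lemma inv_roots (M : Matrix (Fin n) (Fin n) ℝ) (hM : M.PosDef) :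
    (M⁻¹).charpoly.roots = M.charpoly.roots.map (·⁻¹) := by
  set U : Matrix (Fin n) (Fin n) ℝ := (hM.1.eigenvectorUnitary : Matrix (Fin n) (Fin n) ℝ) with hU
  have hU1 : U * star U = 1 := Matrix.mem_unitaryGroup_iff.mp hM.1.eigenvectorUnitary.2
  have hUinv : U⁻¹ = star U := Matrix.inv_eq_right_inv hU1
  have hUdet : IsUnit U.det := Matrix.isUnit_det_of_right_inverse hU1
  have hspec : M = U * Matrix.diagonal hM.1.eigenvalues * U⁻¹ := by
    rw [hUinv]
    simpa [RCLike.ofReal_real_eq_id] using hM.1.spectral_theorem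
  have hMinv : M⁻¹ = U * Matrix.diagonal (fun i => (hM.1.eigenvalues i)⁻¹) * U⁻¹ := by
    conv_lhs => rw [hspec]
    have hd : (Matrix.diagonal hM.1.eigenvalues)⁻¹
        = Matrix.diagonal (fun i => (hM.1.eigenvalues i)⁻¹) := by
      apply Matrix.inv_eq_right_inv
      rw [Matrix.diagonal_mul_diagonal]
      have : (fun i => hM.1.eigenvalues i * (hM.1.eigenvalues i)⁻¹) = fun _ : Fin n => (1:ℝ) :=
        funext fun i => mul_inv_cancel₀ (hM.eigenvalues_pos i).ne'
      rw [this, Matrix.diagonal_one]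
    rw [Matrix.mul_inv_rev, Matrix.mul_inv_rev, Matrix.nonsing_inv_nonsing_inv _ hUdet,
      hd, ← mul_assoc]
  have e1 : Multiset.map (fun i => X - C ((hM.1.eigenvalues i)⁻¹)) Finset.univ.val
      = Multiset.map (fun a => X - C a)
        (Multiset.map (fun i => (hM.1.eigenvalues i)⁻¹) Finset.univ.val) := by
    rw [Multiset.map_map]; rfl
  have e2 : Multiset.map (fun x => x⁻¹) (Multiset.map hM.1.eigenvalues Finset.univ.val)
      = Multiset.map (fun i => (hM.1.eigenvalues i)⁻¹) Finset.univ.val := by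
    rw [Multiset.map_map]; rfl
  rw [hMinv, charpoly_conj _ _ hUdet, charpoly_diag, herm_roots M hM.1,
    Finset.prod_eq_multiset_prod, e1, Polynomial.roots_multiset_prod_X_sub_C, e2]

lemma mono_tuple_unique {f g : Fin n → ℝ} (hf : Monotone f) (hg : Monotone g)
    (h : Multiset.map f Finset.univ.val = Multiset.map g Finset.univ.val) : f = g := by
  have hf' : (List.ofFn f).Pairwise (· ≤ ·) := (List.sortedLE_ofFn_iff.mpr hf).pairwise
  have hg' : (List.ofFn g).Pairwise (· ≤ ·) := (List.sortedLE_ofFn_iff.mpr hg).pairwise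
  have hms : (List.ofFn f : Multiset ℝ) = (List.ofFn g : Multiset ℝ) := by
    rw [← Fin.univ_val_map f, ← Fin.univ_val_map g]; exact h
  have hperm : (List.ofFn f).Perm (List.ofFn g) := Multiset.coe_eq_coe.mp hms
  have : List.ofFn f = List.ofFn g := List.Perm.eq_of_pairwise' hf' hg' hperm
  funext i
  exact congrFun (List.ofFn_injective this) i

lemma posdef_tmul (B : Matrix (Fin n) (Fin n) ℝ) (hB : IsUnit B.det) :
    (Bᵀ * B).PosDef := by
  refine Matrix.PosDef.of_dotProduct_mulVec_pos (by simpa only [Matrix.conjTranspose_eq_transpose_of_trivial] using Matrix.isHermitian_conjTranspose_mul_self B) fun x hx => ?_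
  have hBx : B *ᵥ x ≠ 0 := by
    intro hcon
    exact hx (Matrix.mulVec_injective_iff_isUnit.mpr (Matrix.isUnit_iff_isUnit_det B |>.mpr hB)
      |>.eq_iff.mp (by rw [hcon, Matrix.mulVec_zero]))
  have : star x ⬝ᵥ ((Bᵀ * B) *ᵥ x) = (B *ᵥ x) ⬝ᵥ (B *ᵥ x) := by
    rw [star_trivial, ← Matrix.mulVec_mulVec, Matrix.dotProduct_mulVec, Matrix.vecMul_transpose]
  rw [this]
  have hne : (B *ᵥ x) ⬝ᵥ (B *ᵥ x) ≠ 0 := fun hcon =>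
    hBx (dotProduct_self_eq_zero.mp hcon)
  have hnn : 0 ≤ (B *ᵥ x) ⬝ᵥ (B *ᵥ x) :=
    Finset.sum_nonneg fun i _ => mul_self_nonneg _
  exact lt_of_le_of_ne hnn (Ne.symm hne)

/-- Eigenvalues of a Hermitian matrix sorted in increasing order. -/
noncomputable def sEig (M : Matrix (Fin n) (Fin n) ℝ) (hM : M.IsHermitian) : Fin n → ℝ :=
  hM.eigenvalues ∘ ⇑(Tuple.sort hM.eigenvalues)

lemma sEig_mono (M : Matrix (Fin n) (Fin n) ℝ) (hM : M.IsHermitian) : Monotone (sEig M hM) :=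
  Tuple.monotone_sort _

lemma sEig_ms (M : Matrix (Fin n) (Fin n) ℝ) (hM : M.IsHermitian) :
    Multiset.map (sEig M hM) Finset.univ.val = Multiset.map hM.eigenvalues Finset.univ.val := by
  unfold sEig
  have h1 : Multiset.map (hM.eigenvalues ∘ ⇑(Tuple.sort hM.eigenvalues)) Finset.univ.val
      = Multiset.map hM.eigenvalues
          (Multiset.map (⇑(Tuple.sort hM.eigenvalues)) Finset.univ.val) := by
    rw [Multiset.map_map]
  have h2 : Multiset.map (⇑(Tuple.sort hM.eigenvalues)) Finset.univ.val = Finset.univ.val := by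
    have := Finset.map_univ_equiv (Tuple.sort hM.eigenvalues)
    calc Multiset.map (⇑(Tuple.sort hM.eigenvalues)) Finset.univ.val
        = (Finset.univ.map (Tuple.sort hM.eigenvalues).toEmbedding).val := rfl
      _ = Finset.univ.val := by rw [this]
  rw [h1, h2]

lemma sEig_congr {M N : Matrix (Fin n) (Fin n) ℝ} (h : M = N) (hM : M.IsHermitian)
    (hN : N.IsHermitian) : sEig M hM = sEig N hN := by subst h; rfl

lemma sEig_pos {M : Matrix (Fin n) (Fin n) ℝ} (hM : M.PosDef) (j : Fin n) :
    0 < sEig M hM.1 j := hM.eigenvalues_pos _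

lemma singularValues_eq_sEig {m : ℕ} (M : Matrix (Fin m) (Fin n) ℝ) (i : Fin n) :
    singularValues M i
      = Real.sqrt (sEig (Mᴴ * M) (Matrix.isHermitian_conjTranspose_mul_self M) i.rev) := rfl

end Aux

/-- Lemma 4.1: with 0-based indexing, `σ_i(SFQ) = 1/σ_{n−i+1}(A₁)`
reads `singularValues (S*F*Q) i = (singularValues A₁ i.rev)⁻¹`, and `κ(SFQ) = κ(A₁)`. -/
theorem stmt_18 {m n c : ℕ} (A Q : Matrix (Fin m) (Fin n) ℝ)
    (R : Matrix (Fin n) (Fin n) ℝ)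
    (hA : A.rank = n) (hQR : A = Q * R)
    (hQ : Qᵀ * Q = (1 : Matrix (Fin n) (Fin n) ℝ)) (hR : IsUnit R.det)
    (F : Matrix (Fin m) (Fin m) ℝ) (hF : Fᵀ * F = (1 : Matrix (Fin m) (Fin m) ℝ))
    (S : Matrix (Fin c) (Fin m) ℝ)
    (As : Matrix (Fin c) (Fin n) ℝ) (hAs : As = S * F * A)
    (hAsrank : As.rank = n)
    (Qs : Matrix (Fin c) (Fin n) ℝ) (Rs : Matrix (Fin n) (Fin n) ℝ)
    (hQsRs : As = Qs * Rs)
    (hQs : Qsᵀ * Qs = (1 : Matrix (Fin n) (Fin n) ℝ)) (hRs : IsUnit Rs.det)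
    (A₁ : Matrix (Fin m) (Fin n) ℝ) (hA₁ : A₁ = A * Rs⁻¹) :
    (∀ i : Fin n, singularValues (S * F * Q) i = (singularValues A₁ i.rev)⁻¹) ∧
      kappa (S * F * Q) = kappa A₁ := by
  classical
  set B : Matrix (Fin n) (Fin n) ℝ := R * Rs⁻¹ with hBdef
  have hRsInv : IsUnit (Rs⁻¹).det := Matrix.isUnit_nonsing_inv_det Rs hRs
  have hBdet : IsUnit B.det := by rw [hBdef, Matrix.det_mul]; exact hR.mul hRsInv
  have hBTdet : IsUnit (Bᵀ).det := by rwa [Matrix.det_transpose]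
  -- A₁ = Q * B
  have hQB : A₁ = Q * B := by rw [hA₁, hQR, Matrix.mul_assoc]
  -- S F Q = Qs * B⁻¹
  have hC : Rs * R⁻¹ = B⁻¹ := by
    rw [hBdef, Matrix.mul_inv_rev, Matrix.nonsing_inv_nonsing_inv _ hRs]
  have hSFQR : S * F * Q * R = Qs * Rs := by
    rw [Matrix.mul_assoc (S * F) Q R, ← hQR, ← hAs, hQsRs]
  have hSFQ : S * F * Q = Qs * B⁻¹ := by
    have := Matrix.mul_nonsing_inv_cancel_right R (S * F * Q) hR
    rw [← this, hSFQR, Matrix.mul_assoc Qs Rs R⁻¹, hC]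
  -- Gram matrices
  have hG2 : A₁ᵀ * A₁ = Bᵀ * B := by
    rw [hQB, Matrix.transpose_mul Q B, Matrix.mul_assoc Bᵀ Qᵀ (Q * B),
      ← Matrix.mul_assoc Qᵀ Q B, hQ, Matrix.one_mul]
  have hG1 : (S * F * Q)ᵀ * (S * F * Q) = (B * Bᵀ)⁻¹ := by
    rw [hSFQ, Matrix.transpose_mul Qs B⁻¹, Matrix.mul_assoc (B⁻¹)ᵀ Qsᵀ (Qs * B⁻¹),
      ← Matrix.mul_assoc Qsᵀ Qs B⁻¹, hQs, Matrix.one_mul,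
      Matrix.mul_inv_rev B Bᵀ, Matrix.transpose_nonsing_inv]
  have hPD2 : (Bᵀ * B).PosDef := posdef_tmul B hBdet
  have hPD1' : (B * Bᵀ).PosDef := by
    have := posdef_tmul Bᵀ hBTdet
    rwa [Matrix.transpose_transpose] at this
  have hPD1 : ((B * Bᵀ)⁻¹).PosDef := hPD1'.inv
  -- similarity
  have hsim : B * Bᵀ = B * (Bᵀ * B) * B⁻¹ := by
    rw [← Matrix.mul_assoc B Bᵀ B, Matrix.mul_nonsing_inv_cancel_right B (B * Bᵀ) hBdet]
  -- multiset identity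
  have hms : Multiset.map hPD1.1.eigenvalues Finset.univ.val
      = Multiset.map (fun x => x⁻¹) (Multiset.map hPD2.1.eigenvalues Finset.univ.val) := by
    rw [← herm_roots _ hPD1.1, ← herm_roots _ hPD2.1, inv_roots _ hPD1']
    congr 2
    conv_lhs => rw [hsim]
    exact charpoly_conj B (Bᵀ * B) hBdet
  set e₁ : Fin n → ℝ := sEig ((B * Bᵀ)⁻¹) hPD1.1 with he₁
  set e₂ : Fin n → ℝ := sEig (Bᵀ * B) hPD2.1 with he₂
  have he₂pos : ∀ j, 0 < e₂ j := fun j => sEig_pos hPD2 j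
  set g : Fin n → ℝ := fun j => (e₂ j.rev)⁻¹ with hg
  have hgmono : Monotone g := by
    intro a b hab
    exact inv_anti₀ (he₂pos _)
      (sEig_mono _ _ ((Fin.rev_le_rev).mpr hab))
  have hrevms : Multiset.map (fun j : Fin n => j.rev) Finset.univ.val = Finset.univ.val := by
    have := Finset.map_univ_equiv (Fin.revPerm (n := n))
    calc Multiset.map (fun j : Fin n => j.rev) Finset.univ.val
        = (Finset.univ.map (Fin.revPerm (n := n)).toEmbedding).val := rfl
      _ = Finset.univ.val := by rw [this]
  have hgms : Multiset.map e₁ Finset.univ.val = Multiset.map g Finset.univ.val := by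
    have h1 : Multiset.map g Finset.univ.val
        = Multiset.map (fun x => x⁻¹)
            (Multiset.map e₂ (Multiset.map (fun j : Fin n => j.rev) Finset.univ.val)) := by
      rw [Multiset.map_map, Multiset.map_map]; rfl
    have hL : Multiset.map e₁ Finset.univ.val
        = Multiset.map hPD1.1.eigenvalues Finset.univ.val := sEig_ms _ _
    have hR2 : Multiset.map e₂ Finset.univ.val
        = Multiset.map hPD2.1.eigenvalues Finset.univ.val := sEig_ms _ _
    rw [h1, hrevms, hR2, hL, hms]
  have hkey : e₁ = g := mono_tuple_unique (sEig_mono _ _) hgmono hgms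
  -- part 1
  have part1 : ∀ i : Fin n, singularValues (S * F * Q) i = (singularValues A₁ i.rev)⁻¹ := by
    intro i
    have s1 : singularValues (S * F * Q) i = Real.sqrt (e₁ i.rev) := by
      rw [singularValues_eq_sEig, he₁]
      rw [sEig_congr (by rw [Matrix.conjTranspose_eq_transpose_of_trivial]; exact hG1) (Matrix.isHermitian_conjTranspose_mul_self _) hPD1.1]
    have s2 : singularValues A₁ i.rev = Real.sqrt (e₂ i) := by
      rw [singularValues_eq_sEig, he₂]
      rw [sEig_congr (by rw [Matrix.conjTranspose_eq_transpose_of_trivial]; exact hG2) (Matrix.isHermitian_conjTranspose_mul_self _) hPD2.1, Fin.rev_rev]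
    rw [s1, s2, hkey, hg]
    simp only [Fin.rev_rev]
    exact Real.sqrt_inv _
  refine ⟨part1, ?_⟩
  -- part 2
  by_cases hn : 0 < n
  · have hA₁pos : ∀ j : Fin n, 0 < singularValues A₁ j := by
      intro j
      have : singularValues A₁ j = Real.sqrt (e₂ j.rev) := by
        rw [singularValues_eq_sEig, he₂]
        rw [sEig_congr (by rw [Matrix.conjTranspose_eq_transpose_of_trivial]; exact hG2) (Matrix.isHermitian_conjTranspose_mul_self _) hPD2.1]
      rw [this]
      exact Real.sqrt_pos.mpr (he₂pos _)
    set i0 : Fin n := ⟨0, hn⟩ with hi0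
    set iN : Fin n := ⟨n - 1, Nat.sub_lt hn Nat.one_pos⟩ with hiN
    have hrev0 : i0.rev = iN := by
      apply Fin.ext; simp only [Fin.val_rev, hi0, hiN] <;> omega
    have hrevN : iN.rev = i0 := by
      apply Fin.ext; simp only [Fin.val_rev, hi0, hiN] <;> omega
    rw [kappa, kappa, dif_pos hn, dif_pos hn]
    rw [part1 i0, part1 iN, hrev0, hrevN]
    rw [inv_div_inv]
  · rw [kappa, kappa, dif_neg hn, dif_neg hn]
end
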